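/- Let f : {0,1}^n → {0,1}, let i ≠ j be coordinates, and let f_0, f_1 be the restrictions of f obtained by setting x_j = 0 and x_j = 1 respectively. If i is relevant for f, then 2^{−deg_i(f)} ≤ 2^{−deg_i(f_0) − 1} + 2^{−deg_i(f_1) − 1}, where 2^{−deg_i(g)} is interpreted as 0 when i is not relevant for g. -/

import Mathlib

open MvPolynomial Finset
open scoped Classical

/-- `bval` converts a boolean to the real number 0 or 1. -/
def bval (x : Bool) : ℝ := if x then 1 else 0

/-- `Represents P f` : `P` is the multilinear real polynomial representing the
Boolean function `f : {0,1}^n → {0,1}`. -/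
def Represents {n : ℕ} (P : MvPolynomial (Fin n) ℝ) (f : (Fin n → Bool) → Bool) : Prop :=
  (∀ m ∈ P.support, ∀ i, m i ≤ 1) ∧
  ∀ x : Fin n → Bool, MvPolynomial.eval (fun i => bval (x i)) P = bval (f x)

/-- Flip the `i`-th bit of `x`. -/
def flip1 {n : ℕ} (x : Fin n → Bool) (i : Fin n) : Fin n → Bool :=
  Function.update x i (!(x i))

/-- Coordinate `i` is relevant for `f`. -/
def Relevant {n : ℕ} (f : (Fin n → Bool) → Bool) (i : Fin n) : Prop :=
  ∃ x, f (flip1 x i) ≠ f x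

/-- The set of relevant coordinates of `f`. -/
noncomputable def relSet {n : ℕ} (f : (Fin n → Bool) → Bool) : Finset (Fin n) :=
  Finset.univ.filter fun i => Relevant f i

/-- The influence of coordinate `i` on `f`. -/
noncomputable def influence {n : ℕ} (f : (Fin n → Bool) → Bool) (i : Fin n) : ℝ :=
  ((Finset.univ.filter fun x => f (flip1 x i) ≠ f x).card : ℝ) / 2 ^ n

/-- `degI P i` : the maximal degree of a monomial of `P` containing `x i`. -/
noncomputable def degI {n : ℕ} (P : MvPolynomial (Fin n) ℝ) (i : Fin n) : ℕ :=
  (P.support.filter fun m => m i ≠ 0).sup fun m => m.sum fun _ e => e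

/-- `W P f = Σ_{i ∈ R(f)} 2^{-deg_i(f)}`, computed via the representing polynomial `P`. -/
noncomputable def W {n : ℕ} (P : MvPolynomial (Fin n) ℝ) (f : (Fin n → Bool) → Bool) : ℝ :=
  ∑ i ∈ relSet f, ((2:ℝ) ^ degI P i)⁻¹

/-- Flip the bits of `x` in the block `B`. -/
def flipB {n : ℕ} (x : Fin n → Bool) (B : Finset (Fin n)) : Fin n → Bool :=
  fun j => if j ∈ B then !(x j) else x j

/-- `f` has `b` pairwise disjoint sensitive blocks at some input. -/
def HasSensBlocks {n : ℕ} (f : (Fin n → Bool) → Bool) (b : ℕ) : Prop :=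
  ∃ (x : Fin n → Bool) (B : Fin b → Finset (Fin n)),
    (∀ j k, j ≠ k → Disjoint (B j) (B k)) ∧ ∀ j, f (flipB x (B j)) ≠ f x

/-- The block sensitivity of `f`. -/
noncomputable def bs {n : ℕ} (f : (Fin n → Bool) → Bool) : ℕ :=
  sSup {b | HasSensBlocks f b}

/-- Restriction of `f` fixing the coordinates in `H` according to `α`. -/
def restrict {n : ℕ} (f : (Fin n → Bool) → Bool) (H : Finset (Fin n)) (α : Fin n → Bool) :
    (Fin n → Bool) → Bool :=
  fun x => f fun i => if i ∈ H then α i else x i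

/-- The multilinear monomial (exponent vector) with support `S`. -/
noncomputable def monOf {n : ℕ} (S : Finset (Fin n)) : Fin n →₀ ℕ :=
  ∑ j ∈ S, Finsupp.single j 1

section Aux
variable {n : ℕ}

lemma monOf_apply (S : Finset (Fin n)) (a : Fin n) :
    monOf S a = if a ∈ S then 1 else 0 := by
  classical
  simp only [monOf, Finsupp.finset_sum_apply, Finsupp.single_apply]
  simp [Finset.sum_ite_eq' S a (fun _ => 1)]

lemma monOf_support (S : Finset (Fin n)) : (monOf S).support = S := by
  ext a; simp [Finsupp.mem_support_iff, monOf_apply]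

lemma monOf_eq_self {m : Fin n →₀ ℕ} (h : ∀ i, m i ≤ 1) : monOf m.support = m := by
  ext a
  rw [monOf_apply]
  by_cases ha : a ∈ m.support
  · simp only [ha, if_true]
    have h1 := Finsupp.mem_support_iff.1 ha
    have h2 := h a
    omega
  · simp only [ha, if_false]
    exact (Finsupp.notMem_support_iff.1 ha).symm

lemma monOf_sum (S : Finset (Fin n)) : ((monOf S).sum fun _ e => e) = S.card := by
  rw [Finsupp.sum, monOf_support]
  simp [monOf_apply]
noncomputable def chiB (T : Finset (Fin n)) : Fin n → Bool := fun i => i ∈ T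

noncomputable def cf (g : (Fin n → Bool) → Bool) (S : Finset (Fin n)) : ℝ :=
  ∑ T ∈ S.powerset, (-1 : ℝ) ^ (S.card - T.card) * bval (g (chiB T))

lemma bval_chiB (T : Finset (Fin n)) (i : Fin n) :
    bval (chiB T i) = if i ∈ T then 1 else 0 := by
  by_cases h : i ∈ T <;> simp [chiB, bval, h]

lemma prodInd (s T : Finset (Fin n)) :
    (∏ i ∈ s, (if i ∈ T then (1:ℝ) else 0)) = if s ⊆ T then 1 else 0 := by
  by_cases h : s ⊆ T
  · rw [if_pos h]
    exact Finset.prod_eq_one fun i hi => by rw [if_pos (h hi)]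
  · rw [if_neg h]
    obtain ⟨i, hi, hiT⟩ : ∃ i ∈ s, i ∉ T := by
      by_contra hc; push_neg at hc; exact h hc
    exact Finset.prod_eq_zero hi (by rw [if_neg hiT])

lemma eval_chiB {P : MvPolynomial (Fin n) ℝ} {f : (Fin n → Bool) → Bool}
    (hP : Represents P f) (T : Finset (Fin n)) :
    bval (f (chiB T)) = ∑ S ∈ T.powerset, MvPolynomial.coeff (monOf S) P := by
  rw [← hP.2 (chiB T), MvPolynomial.eval_eq]
  have key : ∀ d ∈ P.support,
      (∏ i ∈ d.support, (bval (chiB T i)) ^ d i) = if d.support ⊆ T then 1 else 0 := by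
    intro d hd
    rw [← prodInd d.support T]
    refine Finset.prod_congr rfl fun i hi => ?_
    have h1 : d i = 1 := by
      have := hP.1 d hd i
      have := Finsupp.mem_support_iff.1 hi
      omega
    rw [h1, pow_one, bval_chiB]
  calc ∑ d ∈ P.support, MvPolynomial.coeff d P * ∏ i ∈ d.support, (bval (chiB T i)) ^ d i
      = ∑ d ∈ P.support.filter (fun d => d.support ⊆ T), MvPolynomial.coeff d P := by
        rw [Finset.sum_filter]
        refine Finset.sum_congr rfl fun d hd => ?_
        rw [key d hd]
        by_cases h : d.support ⊆ T <;> simp [h]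
    _ = ∑ S ∈ T.powerset.filter (fun S => monOf S ∈ P.support),
          MvPolynomial.coeff (monOf S) P := by
        refine Finset.sum_bij' (fun d _ => d.support) (fun S _ => monOf S) ?_ ?_ ?_ ?_ ?_
        · intro d hd
          simp only [Finset.mem_filter, Finset.mem_powerset] at hd ⊢
          rw [monOf_eq_self (hP.1 d hd.1)]
          exact ⟨hd.2, hd.1⟩
        · intro S hS
          simp only [Finset.mem_filter, Finset.mem_powerset] at hS ⊢
          rw [monOf_support]
          exact ⟨hS.2, hS.1⟩
        · intro d hd
          simp only [Finset.mem_filter] at hd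
          exact monOf_eq_self (hP.1 d hd.1)
        · intro S hS
          exact monOf_support S
        · intro d hd
          simp only [Finset.mem_filter] at hd
          rw [monOf_eq_self (hP.1 d hd.1)]
    _ = ∑ S ∈ T.powerset, MvPolynomial.coeff (monOf S) P := by
        rw [Finset.sum_filter]
        refine Finset.sum_congr rfl fun S hS => ?_
        by_cases h : monOf S ∈ P.support
        · rw [if_pos h]
        · rw [if_neg h, MvPolynomial.notMem_support_iff.1 h]

lemma alt_sum_real (W : Finset (Fin n)) :
    (∑ V ∈ W.powerset, (-1:ℝ) ^ V.card) = if W = ∅ then 1 else 0 := by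
  have := Finset.sum_powerset_neg_one_pow_card (x := W)
  have hcast : ((∑ V ∈ W.powerset, (-1:ℤ) ^ V.card : ℤ) : ℝ)
      = ∑ V ∈ W.powerset, (-1:ℝ) ^ V.card := by push_cast; ring_nf
  rw [← hcast, this]
  by_cases h : W = ∅ <;> simp [h]

lemma neg_pow_sub {a b : ℕ} (h : b ≤ a) : (-1:ℝ) ^ (a - b) = (-1:ℝ) ^ a * (-1:ℝ) ^ b := by
  have : (-1:ℝ) ^ (a - b) * (-1:ℝ) ^ b = (-1:ℝ) ^ a := by
    rw [← pow_add]; congr 1; omega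
  have hb : ((-1:ℝ) ^ b) * ((-1:ℝ) ^ b) = 1 := by
    rw [← pow_add, Even.neg_one_pow ⟨b, rfl⟩]
  calc (-1:ℝ) ^ (a-b) = (-1:ℝ) ^ (a-b) * ((-1:ℝ)^b * (-1:ℝ)^b) := by rw [hb, mul_one]
    _ = ((-1:ℝ) ^ (a-b) * (-1:ℝ)^b) * (-1:ℝ)^b := by ring
    _ = (-1:ℝ) ^ a * (-1:ℝ) ^ b := by rw [this]

lemma inner_alt (S U : Finset (Fin n)) (hUS : U ⊆ S) :
    (∑ T ∈ S.powerset.filter (fun T => U ⊆ T), (-1:ℝ) ^ (S.card - T.card))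
      = if U = S then 1 else 0 := by
  have hbij : (∑ T ∈ S.powerset.filter (fun T => U ⊆ T), (-1:ℝ) ^ (S.card - T.card))
      = ∑ V ∈ (S \ U).powerset, (-1:ℝ) ^ ((S \ U).card - V.card) := by
    refine Finset.sum_bij' (fun T _ => T \ U) (fun V _ => V ∪ U) ?_ ?_ ?_ ?_ ?_
    · intro T hT
      simp only [Finset.mem_filter, Finset.mem_powerset] at hT ⊢
      exact Finset.sdiff_subset_sdiff hT.1 Finset.Subset.rfl
    · intro V hV
      simp only [Finset.mem_filter, Finset.mem_powerset] at hV ⊢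
      constructor
      · exact Finset.union_subset (hV.trans (Finset.sdiff_subset)) hUS
      · exact Finset.subset_union_right
    · intro T hT
      simp only [Finset.mem_filter, Finset.mem_powerset] at hT
      exact Finset.sdiff_union_of_subset hT.2
    · intro V hV
      simp only [Finset.mem_powerset] at hV
      have : Disjoint V U := Finset.disjoint_of_subset_left hV Finset.sdiff_disjoint
      show (V ∪ U) \ U = V
      rw [Finset.union_sdiff_right, Finset.sdiff_eq_self_of_disjoint this]
    · intro T hT
      simp only [Finset.mem_filter, Finset.mem_powerset] at hT
      have h1 : U ⊆ T := hT.2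
      have h2 : T ⊆ S := hT.1
      have e1 : (T \ U).card = T.card - U.card := Finset.card_sdiff_of_subset h1
      have e2 : (S \ U).card = S.card - U.card := Finset.card_sdiff_of_subset hUS
      have hU1 := Finset.card_le_card h1
      have hU2 := Finset.card_le_card h2
      congr 1
      omega
  rw [hbij]
  have : ∀ V ∈ (S \ U).powerset, (-1:ℝ) ^ ((S \ U).card - V.card)
      = (-1:ℝ) ^ (S \ U).card * (-1:ℝ) ^ V.card := by
    intro V hV
    exact neg_pow_sub (Finset.card_le_card (Finset.mem_powerset.1 hV))
  rw [Finset.sum_congr rfl this, ← Finset.mul_sum, alt_sum_real]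
  by_cases h : S \ U = ∅
  · have hUS' : U = S := Finset.Subset.antisymm hUS (by
      intro a ha
      by_contra hc
      exact (Finset.eq_empty_iff_forall_notMem.1 h a) (Finset.mem_sdiff.2 ⟨ha, hc⟩))
    simp [h, hUS']
  · have : U ≠ S := by
      intro he; exact h (by rw [he, Finset.sdiff_self])
    simp [h, this]

lemma cf_eq_coeff {P : MvPolynomial (Fin n) ℝ} {f : (Fin n → Bool) → Bool}
    (hP : Represents P f) (S : Finset (Fin n)) :
    cf f S = MvPolynomial.coeff (monOf S) P := by
  unfold cf
  have h1 : ∀ T ∈ S.powerset, (-1:ℝ) ^ (S.card - T.card) * bval (f (chiB T))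
      = ∑ U ∈ T.powerset, (-1:ℝ) ^ (S.card - T.card) * MvPolynomial.coeff (monOf U) P := by
    intro T _
    rw [eval_chiB hP T, Finset.mul_sum]
  rw [Finset.sum_congr rfl h1]
  rw [Finset.sum_comm' (s := S.powerset) (t := fun T => T.powerset)
      (t' := S.powerset) (s' := fun U => S.powerset.filter (fun T => U ⊆ T))
      (f := fun T U => (-1:ℝ) ^ (S.card - T.card) * MvPolynomial.coeff (monOf U) P)
      (by
        intro T U
        simp only [Finset.mem_powerset, Finset.mem_filter]
        constructor
        · rintro ⟨h1, h2⟩; exact ⟨⟨h1, h2⟩, h2.trans h1⟩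
        · rintro ⟨⟨h1, h2⟩, _⟩; exact ⟨h1, h2⟩)]
  have h2 : ∀ U ∈ S.powerset,
      (∑ T ∈ S.powerset.filter (fun T => U ⊆ T),
        (-1:ℝ) ^ (S.card - T.card) * MvPolynomial.coeff (monOf U) P)
      = (if U = S then 1 else 0) * MvPolynomial.coeff (monOf U) P := by
    intro U hU
    rw [← Finset.sum_mul, inner_alt S U (Finset.mem_powerset.1 hU)]
  rw [Finset.sum_congr rfl h2]
  simp only [ite_mul, one_mul, zero_mul]
  rw [Finset.sum_ite_eq' S.powerset S (fun U => MvPolynomial.coeff (monOf U) P)]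
  simp [Finset.mem_powerset]
lemma chiB_insert (j : Fin n) (T : Finset (Fin n)) (hj : j ∉ T) :
    chiB (insert j T) = flip1 (chiB T) j := by
  funext k
  by_cases hk : k = j
  · subst hk
    simp [chiB, flip1, Function.update_self, hj]
  · simp [chiB, flip1, Function.update_of_ne hk, Finset.mem_insert, hk]

/-- If `g` is insensitive to coordinate `j`, every `cf` coefficient of a set
containing `j` vanishes. -/
lemma cf_eq_zero_of_insensitive {g : (Fin n → Bool) → Bool} {j : Fin n}
    (hg : ∀ x, g (flip1 x j) = g x) {S : Finset (Fin n)} (hj : j ∈ S) :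
    cf g S = 0 := by
  classical
  obtain ⟨s, hjs, rfl⟩ : ∃ s, j ∉ s ∧ insert j s = S :=
    ⟨S.erase j, Finset.notMem_erase j S, Finset.insert_erase hj⟩
  unfold cf
  rw [Finset.sum_powerset_insert hjs]
  rw [← Finset.sum_add_distrib]
  refine Finset.sum_eq_zero fun T hT => ?_
  have hTs : T ⊆ s := Finset.mem_powerset.1 hT
  have hjT : j ∉ T := fun h => hjs (hTs h)
  have hcard : (insert j s).card = s.card + 1 := Finset.card_insert_of_notMem hjs
  have hcardT : (insert j T).card = T.card + 1 := Finset.card_insert_of_notMem hjT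
  have hval : g (chiB (insert j T)) = g (chiB T) := by
    rw [chiB_insert j T hjT]; exact hg (chiB T)
  rw [hval, hcard, hcardT]
  have hle : T.card ≤ s.card := Finset.card_le_card hTs
  have h1 : s.card + 1 - T.card = (s.card - T.card) + 1 := by omega
  have h2 : s.card + 1 - (T.card + 1) = s.card - T.card := by omega
  rw [h1, h2, pow_succ]
  ring

lemma bval_inj {a b : Bool} (h : bval a = bval b) : a = b := by
  cases a <;> cases b <;> simp [bval] at h ⊢

noncomputable def bSet (x : Fin n → Bool) : Finset (Fin n) :=
  Finset.univ.filter fun k => x k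

lemma chiB_bSet (x : Fin n → Bool) : chiB (bSet x) = x := by
  funext k
  by_cases h : x k = true <;> simp [chiB, bSet, h]

lemma bSet_flip1_erase (x : Fin n → Bool) (i : Fin n) :
    (bSet (flip1 x i)).erase i = (bSet x).erase i := by
  ext k
  unfold flip1
  simp only [Finset.mem_erase, bSet, Finset.mem_filter, Finset.mem_univ, true_and, flip1]
  constructor
  · rintro ⟨hk, h⟩
    rw [Function.update_of_ne hk] at h
    exact ⟨hk, h⟩
  · rintro ⟨hk, h⟩
    rw [Function.update_of_ne hk]
    exact ⟨hk, h⟩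

/-- If all `cf` coefficients of sets containing `i` vanish, `f` is insensitive to `i`. -/
lemma insensitive_of_cf {P : MvPolynomial (Fin n) ℝ} {f : (Fin n → Bool) → Bool}
    (hP : Represents P f) {i : Fin n} (h : ∀ S, i ∈ S → cf f S = 0) :
    ∀ x, f (flip1 x i) = f x := by
  have key : ∀ T : Finset (Fin n), f (chiB T) = f (chiB (T.erase i)) := by
    intro T
    apply bval_inj
    rw [eval_chiB hP, eval_chiB hP]
    have : ∀ S, MvPolynomial.coeff (monOf S) P = cf f S := fun S => (cf_eq_coeff hP S).symm
    simp only [this]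
    refine (Finset.sum_subset (Finset.powerset_mono.2 (Finset.erase_subset i T)) ?_).symm
    intro S hS hS'
    simp only [Finset.mem_powerset] at hS hS'
    apply h S
    by_contra hi
    exact hS' fun a ha => Finset.mem_erase.2 ⟨fun he => hi (he ▸ ha), hS ha⟩
  intro x
  calc f (flip1 x i) = f (chiB (bSet (flip1 x i))) := by rw [chiB_bSet]
    _ = f (chiB ((bSet (flip1 x i)).erase i)) := key _
    _ = f (chiB ((bSet x).erase i)) := by rw [bSet_flip1_erase]
    _ = f (chiB (bSet x)) := (key _).symm
    _ = f x := by rw [chiB_bSet]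

lemma degI_eq {P : MvPolynomial (Fin n) ℝ} {f : (Fin n → Bool) → Bool}
    (hP : Represents P f) (i : Fin n) :
    degI P i = (Finset.univ.filter fun S : Finset (Fin n) => i ∈ S ∧ cf f S ≠ 0).sup
      Finset.card := by
  apply le_antisymm
  · apply Finset.sup_le
    intro m hm
    simp only [Finset.mem_filter] at hm
    obtain ⟨hm1, hm2⟩ := hm
    have hmul := hP.1 m hm1
    have hS : cf f m.support ≠ 0 := by
      rw [cf_eq_coeff hP, monOf_eq_self hmul]
      exact MvPolynomial.mem_support_iff.1 hm1
    have hiS : i ∈ m.support := Finsupp.mem_support_iff.2 hm2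
    have : (m.sum fun _ e => e) = m.support.card := by
      conv_lhs => rw [← monOf_eq_self hmul]
      rw [monOf_sum]
    rw [this]
    exact Finset.le_sup (Finset.mem_filter.2 ⟨Finset.mem_univ _, hiS, hS⟩)
  · apply Finset.sup_le
    intro S hS
    simp only [Finset.mem_filter] at hS
    obtain ⟨_, hiS, hcf⟩ := hS
    have h1 : monOf S ∈ P.support := by
      rw [MvPolynomial.mem_support_iff, ← cf_eq_coeff hP]
      exact hcf
    have h2 : monOf S i ≠ 0 := by
      rw [monOf_apply, if_pos hiS]; norm_num
    have hmem : monOf S ∈ P.support.filter (fun m => m i ≠ 0) :=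
      Finset.mem_filter.2 ⟨h1, h2⟩
    have := Finset.le_sup (f := fun m : Fin n →₀ ℕ => m.sum fun _ e => e) hmem
    rwa [monOf_sum] at this
section Restriction

variable {f : (Fin n → Bool) → Bool} {j : Fin n}

lemma restrict0_chiB (T : Finset (Fin n)) (hj : j ∉ T) :
    restrict f {j} (fun _ => false) (chiB T) = f (chiB T) := by
  unfold _root_.restrict
  congr 1
  funext k
  by_cases hk : k ∈ ({j} : Finset (Fin n))
  · rw [if_pos hk]
    have : k = j := Finset.mem_singleton.1 hk
    subst this
    simp [chiB, hj]
  · rw [if_neg hk]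

lemma restrict1_chiB (T : Finset (Fin n)) (hj : j ∉ T) :
    restrict f {j} (fun _ => true) (chiB T) = f (chiB (insert j T)) := by
  unfold _root_.restrict
  congr 1
  funext k
  by_cases hk : k ∈ ({j} : Finset (Fin n))
  · rw [if_pos hk]
    have : k = j := Finset.mem_singleton.1 hk
    subst this
    simp [chiB]
  · rw [if_neg hk]
    have hkj : k ≠ j := fun h => hk (Finset.mem_singleton.2 h)
    simp [chiB, Finset.mem_insert, hkj]

lemma restrict_insensitive (α : Fin n → Bool) :
    ∀ x, restrict f {j} α (flip1 x j) = restrict f {j} α x := by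
  intro x
  unfold _root_.restrict
  congr 1
  funext k
  by_cases hk : k ∈ ({j} : Finset (Fin n))
  · rw [if_pos hk, if_pos hk]
  · rw [if_neg hk, if_neg hk]
    have hkj : k ≠ j := fun h => hk (Finset.mem_singleton.2 h)
    rw [flip1, Function.update_of_ne hkj]

lemma cf_restrict0 (S : Finset (Fin n)) (hj : j ∉ S) :
    cf (restrict f {j} (fun _ => false)) S = cf f S := by
  unfold cf
  refine Finset.sum_congr rfl fun T hT => ?_
  have hjT : j ∉ T := fun h => hj (Finset.mem_powerset.1 hT h)
  rw [restrict0_chiB T hjT]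

lemma cf_insert_eq (S : Finset (Fin n)) (hj : j ∉ S) :
    cf f (insert j S) = cf (restrict f {j} (fun _ => true)) S
      - cf (restrict f {j} (fun _ => false)) S := by
  unfold cf
  rw [Finset.sum_powerset_insert hj]
  have hcard : (insert j S).card = S.card + 1 := Finset.card_insert_of_notMem hj
  have h1 : (∑ T ∈ S.powerset, (-1:ℝ) ^ ((insert j S).card - T.card) * bval (f (chiB T)))
      = -∑ T ∈ S.powerset, (-1:ℝ) ^ (S.card - T.card)
          * bval (restrict f {j} (fun _ => false) (chiB T)) := by
    rw [← Finset.sum_neg_distrib]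
    refine Finset.sum_congr rfl fun T hT => ?_
    have hTS : T ⊆ S := Finset.mem_powerset.1 hT
    have hjT : j ∉ T := fun h => hj (hTS h)
    have hle : T.card ≤ S.card := Finset.card_le_card hTS
    rw [restrict0_chiB T hjT, hcard]
    have : S.card + 1 - T.card = (S.card - T.card) + 1 := by omega
    rw [this, pow_succ]
    ring
  have h2 : (∑ T ∈ S.powerset, (-1:ℝ) ^ ((insert j S).card - (insert j T).card)
        * bval (f (chiB (insert j T))))
      = ∑ T ∈ S.powerset, (-1:ℝ) ^ (S.card - T.card)
          * bval (restrict f {j} (fun _ => true) (chiB T)) := by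
    refine Finset.sum_congr rfl fun T hT => ?_
    have hTS : T ⊆ S := Finset.mem_powerset.1 hT
    have hjT : j ∉ T := fun h => hj (hTS h)
    rw [restrict1_chiB T hjT, hcard, Finset.card_insert_of_notMem hjT]
    congr 2
    omega
  rw [h1, h2]
  ring

end Restriction

lemma nonempty_filter_of_relevant {Q : MvPolynomial (Fin n) ℝ} {g : (Fin n → Bool) → Bool}
    (hQ : Represents Q g) {i : Fin n} (h : Relevant g i) :
    (Finset.univ.filter fun S : Finset (Fin n) => i ∈ S ∧ cf g S ≠ 0).Nonempty := by
  rw [Finset.nonempty_iff_ne_empty]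
  intro he
  obtain ⟨x, hx⟩ := h
  apply hx
  refine insensitive_of_cf hQ (fun S hS => ?_) x
  by_contra hc
  have hmem : S ∈ Finset.univ.filter fun S : Finset (Fin n) => i ∈ S ∧ cf g S ≠ 0 :=
    Finset.mem_filter.2 ⟨Finset.mem_univ _, hS, hc⟩
  rw [he] at hmem
  exact absurd hmem (Finset.notMem_empty _)

lemma cf_eq_zero_of_not_relevant {g : (Fin n → Bool) → Bool} {i : Fin n}
    (h : ¬ Relevant g i) {S : Finset (Fin n)} (hS : i ∈ S) : cf g S = 0 := by
  unfold Relevant at h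
  push_neg at h
  exact cf_eq_zero_of_insensitive h hS

lemma exists_top {g : (Fin n → Bool) → Bool} {i j : Fin n} {Q : MvPolynomial (Fin n) ℝ}
    (hQ : Represents Q g) (h : Relevant g i) (hins : ∀ x, g (flip1 x j) = g x) :
    ∃ S : Finset (Fin n), i ∈ S ∧ j ∉ S ∧ cf g S ≠ 0 ∧
      S.card = (Finset.univ.filter fun S : Finset (Fin n) => i ∈ S ∧ cf g S ≠ 0).sup
        Finset.card := by
  obtain ⟨S, hSmem, hScard⟩ := Finset.exists_mem_eq_sup _ (nonempty_filter_of_relevant hQ h)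
    Finset.card
  simp only [Finset.mem_filter] at hSmem
  refine ⟨S, hSmem.2.1, ?_, hSmem.2.2, hScard.symm⟩
  intro hjS
  exact hSmem.2.2 (cf_eq_zero_of_insensitive hins hjS)

lemma inv_pow_mono {a b : ℕ} (h : a ≤ b) : ((2:ℝ)^b)⁻¹ ≤ ((2:ℝ)^a)⁻¹ := by
  gcongr
  norm_num


end Aux

/-- if `i ≠ j` and `i` is relevant for `f`, then
`2^{-deg_i(f)} ≤ 2^{-deg_i(f_0)-1} + 2^{-deg_i(f_1)-1}`, where `f_0`, `f_1` are the
restrictions setting `x_j = 0, 1`, and `2^{-deg_i(g)}` is read as `0` when `i` is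
irrelevant for `g`. -/
theorem stmt_3 {n : ℕ} (f : (Fin n → Bool) → Bool) (P : MvPolynomial (Fin n) ℝ)
    (hP : Represents P f) (i j : Fin n) (hij : i ≠ j)
    (f0 f1 : (Fin n → Bool) → Bool)
    (hf0 : f0 = restrict f {j} (fun _ => false))
    (hf1 : f1 = restrict f {j} (fun _ => true))
    (Q0 Q1 : MvPolynomial (Fin n) ℝ)
    (hQ0 : Represents Q0 f0) (hQ1 : Represents Q1 f1)
    (hi : Relevant f i) :
    ((2:ℝ) ^ degI P i)⁻¹ ≤
      (if Relevant f0 i then ((2:ℝ) ^ degI Q0 i)⁻¹ else 0) / 2 +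
      (if Relevant f1 i then ((2:ℝ) ^ degI Q1 i)⁻¹ else 0) / 2 := by
  have hins0 : ∀ x, f0 (flip1 x j) = f0 x := by
    rw [hf0]; exact restrict_insensitive _
  have hins1 : ∀ x, f1 (flip1 x j) = f1 x := by
    rw [hf1]; exact restrict_insensitive _
  have hd := degI_eq hP i
  have hd0 := degI_eq hQ0 i
  have hd1 := degI_eq hQ1 i
  -- membership in A implies bound on degI P i
  have hbound : ∀ S : Finset (Fin n), i ∈ S → cf f S ≠ 0 → S.card ≤ degI P i := by
    intro S hiS hcf
    rw [hd]
    exact Finset.le_sup (Finset.mem_filter.2 ⟨Finset.mem_univ _, hiS, hcf⟩)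
  -- key degree bounds
  have key0 : Relevant f0 i → degI Q0 i ≤ degI P i := by
    intro h0
    obtain ⟨S, hiS, hjS, hcf, hcard⟩ := exists_top hQ0 h0 hins0
    have hcfS : cf f S ≠ 0 := by
      rw [← cf_restrict0 S hjS, ← hf0]
      exact hcf
    rw [hd0, ← hcard]
    exact hbound S hiS hcfS
  have key1 : Relevant f1 i → degI Q1 i ≤ degI P i := by
    intro h1
    obtain ⟨S, hiS, hjS, hcf, hcard⟩ := exists_top hQ1 h1 hins1
    by_cases hc : cf f S = 0
    · -- then cf f (insert j S) = cf f1 S - cf f0 S = cf f1 S - cf f S ≠ 0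
      have hins : cf f (insert j S) = cf f1 S - cf f0 S := by
        rw [hf0, hf1]; exact cf_insert_eq S hjS
      have hf0S : cf f0 S = cf f S := by rw [hf0]; exact cf_restrict0 S hjS
      have hne : cf f (insert j S) ≠ 0 := by
        rw [hins, hf0S, hc, sub_zero]
        exact hcf
      have := hbound (insert j S) (Finset.mem_insert_of_mem hiS) hne
      rw [Finset.card_insert_of_notMem hjS] at this
      rw [hd1, ← hcard]
      omega
    · rw [hd1, ← hcard]
      exact hbound S hiS hc
  by_cases h0 : Relevant f0 i <;> by_cases h1 : Relevant f1 i
  · -- both relevant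
    rw [if_pos h0, if_pos h1]
    have e : ((2:ℝ) ^ degI P i)⁻¹
        = ((2:ℝ) ^ degI P i)⁻¹ / 2 + ((2:ℝ) ^ degI P i)⁻¹ / 2 := by ring
    rw [e]
    have l0 := inv_pow_mono (key0 h0)
    have l1 := inv_pow_mono (key1 h1)
    apply add_le_add <;> apply div_le_div_of_nonneg_right _ (by norm_num) <;> assumption
  · -- only f0 relevant
    rw [if_pos h0, if_neg h1]
    obtain ⟨S, hiS, hjS, hcf, hcard⟩ := exists_top hQ0 h0 hins0
    have hins : cf f (insert j S) = cf f1 S - cf f0 S := by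
      rw [hf0, hf1]; exact cf_insert_eq S hjS
    have hz1 : cf f1 S = 0 := cf_eq_zero_of_not_relevant h1 hiS
    have hne : cf f (insert j S) ≠ 0 := by
      rw [hins, hz1, zero_sub, neg_ne_zero]
      exact hcf
    have hb := hbound (insert j S) (Finset.mem_insert_of_mem hiS) hne
    rw [Finset.card_insert_of_notMem hjS] at hb
    have hdle : degI Q0 i + 1 ≤ degI P i := by
      rw [hd0, ← hcard]; omega
    have := inv_pow_mono hdle
    have e : ((2:ℝ) ^ (degI Q0 i + 1))⁻¹ = ((2:ℝ) ^ degI Q0 i)⁻¹ / 2 := by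
      rw [pow_succ, mul_inv]; ring
    rw [e] at this
    linarith
  · -- only f1 relevant
    rw [if_neg h0, if_pos h1]
    obtain ⟨S, hiS, hjS, hcf, hcard⟩ := exists_top hQ1 h1 hins1
    have hins : cf f (insert j S) = cf f1 S - cf f0 S := by
      rw [hf0, hf1]; exact cf_insert_eq S hjS
    have hz0 : cf f0 S = 0 := cf_eq_zero_of_not_relevant h0 hiS
    have hne : cf f (insert j S) ≠ 0 := by
      rw [hins, hz0, sub_zero]
      exact hcf
    have hb := hbound (insert j S) (Finset.mem_insert_of_mem hiS) hne
    rw [Finset.card_insert_of_notMem hjS] at hb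
    have hdle : degI Q1 i + 1 ≤ degI P i := by
      rw [hd1, ← hcard]; omega
    have := inv_pow_mono hdle
    have e : ((2:ℝ) ^ (degI Q1 i + 1))⁻¹ = ((2:ℝ) ^ degI Q1 i)⁻¹ / 2 := by
      rw [pow_succ, mul_inv]; ring
    rw [e] at this
    linarith
  · -- neither relevant: contradiction
    exfalso
    obtain ⟨x, hx⟩ := hi
    have hxj : flip1 x i j = x j := by
      rw [flip1, Function.update_of_ne (Ne.symm hij)]
    cases hxv : x j with
    | false =>
      apply hx
      have e1 : f0 x = f x := by
        rw [hf0]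
        unfold _root_.restrict
        congr 1
        funext k
        by_cases hk : k ∈ ({j} : Finset (Fin n))
        · rw [if_pos hk]
          have : k = j := Finset.mem_singleton.1 hk
          subst this
          exact hxv.symm
        · rw [if_neg hk]
      have e2 : f0 (flip1 x i) = f (flip1 x i) := by
        rw [hf0]
        unfold _root_.restrict
        congr 1
        funext k
        by_cases hk : k ∈ ({j} : Finset (Fin n))
        · rw [if_pos hk]
          have : k = j := Finset.mem_singleton.1 hk
          subst this
          rw [hxj, hxv]
        · rw [if_neg hk]
      unfold Relevant at h0
      push_neg at h0
      rw [← e1, ← e2]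
      exact h0 x
    | true =>
      apply hx
      have e1 : f1 x = f x := by
        rw [hf1]
        unfold _root_.restrict
        congr 1
        funext k
        by_cases hk : k ∈ ({j} : Finset (Fin n))
        · rw [if_pos hk]
          have : k = j := Finset.mem_singleton.1 hk
          subst this
          exact hxv.symm
        · rw [if_neg hk]
      have e2 : f1 (flip1 x i) = f (flip1 x i) := by
        rw [hf1]
        unfold _root_.restrict
        congr 1
        funext k
        by_cases hk : k ∈ ({j} : Finset (Fin n))
        · rw [if_pos hk]
          have : k = j := Finset.mem_singleton.1 hk
          subst this
          rw [hxj, hxv]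
        · rw [if_neg hk]
      unfold Relevant at h1
      push_neg at h1
      rw [← e1, ← e2]
      exact h1 x
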